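/- Let X be a complex Banach space, η ∈ (0,1), and let L = P + N be a (1,η)-gap decomposition of a bounded linear operator L on X. Then for every z ∈ ℂ with |z| > η and z ≠ 1, the operators z·I − N and z·I − L are invertible, and (z·I − L)⁻¹ = (z − 1)⁻¹ · P + (z·I − N)⁻¹ ∘ (I − P). -/

import Mathlib

open ContinuousLinearMap

/-- if `L = P + N` is a `(1,η)`-gap decomposition of a bounded operator `L`
on a complex Banach space, then for every `z` with `|z| > η` and `z ≠ 1` the operators
`zI - N` and `zI - L` are invertible and
`(zI - L)⁻¹ = (z-1)⁻¹ • P + (zI - N)⁻¹ ∘ (I - P)`. -/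
theorem stmt1 {X : Type*} [NormedAddCommGroup X] [NormedSpace ℂ X] [CompleteSpace X]
    (η : ℝ) (hη : η ∈ Set.Ioo (0 : ℝ) 1) (L P N : X →L[ℂ] X)
    (hPP : P * P = P) (hLP : L * P = P) (hPL : P * L = P)
    (hPN : P * N = 0) (hNP : N * P = 0) (hLPN : L = P + N)
    (hr : spectralRadius ℂ N ≤ ENNReal.ofReal η) :
    ∀ z : ℂ, η < ‖z‖ → z ≠ 1 →
      IsUnit (algebraMap ℂ (X →L[ℂ] X) z - N) ∧
      IsUnit (algebraMap ℂ (X →L[ℂ] X) z - L) ∧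
      Ring.inverse (algebraMap ℂ (X →L[ℂ] X) z - L) =
        (z - 1)⁻¹ • P + Ring.inverse (algebraMap ℂ (X →L[ℂ] X) z - N) * (1 - P) := by
  intro z hz hz1
  have hz0 : z ≠ 0 := by
    intro h
    rw [h, norm_zero] at hz
    linarith [hη.1]
  have hz1' : z - 1 ≠ 0 := sub_ne_zero.mpr hz1
  set B : X →L[ℂ] X := algebraMap ℂ (X →L[ℂ] X) z - N with hBdef
  have hBunit : IsUnit B := by
    rw [hBdef, ← spectrum.notMem_iff]
    intro hmem
    have h1 : (‖z‖₊ : ENNReal) ≤ spectralRadius ℂ N :=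
      le_iSup₂ (f := fun k (_ : k ∈ spectrum ℂ N) => (‖k‖₊ : ENNReal)) z hmem
    have h2 : (‖z‖₊ : ENNReal) ≤ ENNReal.ofReal η := h1.trans hr
    rw [← enorm_eq_nnnorm, ← ofReal_norm, ENNReal.ofReal_le_ofReal_iff hη.1.le] at h2
    linarith
  obtain ⟨u, hu⟩ := hBunit
  set v : X →L[ℂ] X := (↑u⁻¹ : X →L[ℂ] X) with hvdef
  have hvB : v * B = 1 := by rw [hvdef, ← hu, u.inv_mul]
  have hBv : B * v = 1 := by rw [hvdef, ← hu, u.mul_inv]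
  have halg : algebraMap ℂ (X →L[ℂ] X) z = z • (1 : X →L[ℂ] X) :=
    Algebra.algebraMap_eq_smul_one z
  have hPB : P * B = z • P := by
    rw [hBdef, mul_sub, hPN, halg, mul_smul_comm, mul_one, sub_zero]
  have hBP : B * P = z • P := by
    rw [hBdef, sub_mul, hNP, halg, smul_mul_assoc, one_mul, sub_zero]
  have hvP : v * P = z⁻¹ • P := by
    have h : v * (B * P) = P := by rw [← mul_assoc, hvB, one_mul]
    rw [hBP, mul_smul_comm] at h
    calc v * P = z⁻¹ • (z • (v * P)) := by
          rw [smul_smul, inv_mul_cancel₀ hz0, one_smul]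
      _ = z⁻¹ • P := by rw [h]
  have hPv : P * v = z⁻¹ • P := by
    have h : P * B * v = P := by rw [mul_assoc, hBv, mul_one]
    rw [hPB, smul_mul_assoc] at h
    calc P * v = z⁻¹ • (z • (P * v)) := by
          rw [smul_smul, inv_mul_cancel₀ hz0, one_smul]
      _ = z⁻¹ • P := by rw [h]
  set R : X →L[ℂ] X := (z - 1)⁻¹ • P + v * (1 - P) with hRdef
  set A : X →L[ℂ] X := algebraMap ℂ (X →L[ℂ] X) z - L with hAdef
  have hAB : A = B - P := by rw [hAdef, hBdef, hLPN]; abel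
  have hsmulP : (z - 1)⁻¹ • (z • P - P) = P := by
    have : z • P - P = (z - 1) • P := by rw [sub_smul, one_smul]
    rw [this, smul_smul, inv_mul_cancel₀ hz1', one_smul]
  have hRA : R * A = 1 := by
    have t1 : ((z - 1)⁻¹ • P) * A = P := by
      rw [hAB, smul_mul_assoc, mul_sub, hPB, hPP, hsmulP]
    have t2 : (v * (1 - P)) * A = 1 - P := by
      have h1 : (1 - P) * A = B - z • P := by
        rw [hAB, sub_mul, one_mul, mul_sub, hPB, hPP]
        abel
      rw [mul_assoc, h1, mul_sub, hvB, mul_smul_comm, hvP, smul_smul,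
        mul_inv_cancel₀ hz0, one_smul]
    rw [hRdef, add_mul, t1, t2]
    abel
  have hAR : A * R = 1 := by
    have t1 : A * ((z - 1)⁻¹ • P) = P := by
      rw [hAB, mul_smul_comm, sub_mul, hBP, hPP, hsmulP]
    have t2 : A * (v * (1 - P)) = 1 - P := by
      have h1 : A * v = 1 - z⁻¹ • P := by
        rw [hAB, sub_mul, hBv, hPv]
      rw [← mul_assoc, h1, sub_mul, one_mul, smul_mul_assoc, mul_sub, mul_one, hPP,
        smul_sub]
      abel
    rw [hRdef, mul_add, t1, t2]
    abel
  have hAunit : IsUnit A := ⟨⟨A, R, hAR, hRA⟩, rfl⟩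
  refine ⟨⟨u, hu⟩, hAunit, ?_⟩
  have h1 : Ring.inverse A = R :=
    Ring.inverse_unit (⟨A, R, hAR, hRA⟩ : Units (X →L[ℂ] X))
  have h2 : Ring.inverse B = v := by rw [← hu, Ring.inverse_unit]
  rw [h1, h2, hRdef]
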